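/- Let (x^k)_{k ≥ −1} be a cDCA sequence with x⁰ ∈ dom g, and suppose F is bounded below on ℝⁿ. Then Σ_{k=0}^∞ ‖x^k − x^{k+1}‖² is finite, and consequently ‖x^k − x^{k+1}‖ → 0 as k → ∞. -/

import Mathlib

set_option maxHeartbeats 1000000


open Set Filter Topology
open scoped InnerProductSpace

noncomputable section

abbrev Euc (n : ℕ) := EuclideanSpace ℝ (Fin n)

/-- The subdifferential of a real-valued function `h` at `u`. -/
def SubdiffR {n : ℕ} (h : Euc n → ℝ) (u : Euc n) : Set (Euc n) :=
  {ξ | ∀ z, h u + ⟪ξ, z - u⟫_ℝ ≤ h z}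

/-- Convexity for extended-real-valued functions. -/
def ConvexEReal {n : ℕ} (g : Euc n → EReal) : Prop :=
  ∀ x y : Euc n, ∀ a b : ℝ, 0 ≤ a → 0 ≤ b → a + b = 1 →
    g (a • x + b • y) ≤ (a : EReal) * g x + (b : EReal) * g y

/-- `g` is proper: nowhere `⊥` and somewhere finite. -/
def ProperE {n : ℕ} (g : Euc n → EReal) : Prop :=
  (∀ x, g x ≠ ⊥) ∧ ∃ x, g x ≠ ⊤

/-- `P` is the proximal mapping of `g`: for every `α > 0` and every `x`, `P α x` is
the unique minimizer over `ℝⁿ` of `y ↦ g y + (1/(2α)) ‖x - y‖²`. -/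
def IsProx {n : ℕ} (g : Euc n → EReal) (P : ℝ → Euc n → Euc n) : Prop :=
  ∀ α : ℝ, 0 < α → ∀ x p, P α x = p ↔
    (∀ y, g p + ((1/(2*α) * ‖x - p‖^2 : ℝ) : EReal) ≤ g y + ((1/(2*α) * ‖x - y‖^2 : ℝ) : EReal))

/-- A cDCA sequence, indexed so that `x 0 = x⁻¹` and `x (k+1) = xᵏ` for `k ≥ 0`:
for every `k ≥ 0` there exist `ηᵏ ∈ ∂h(xᵏ)` and `yᵏ` with
`x^{k+1} = Prox_{μg}((1-μλ)yᵏ - μ∇f(yᵏ) + μλxᵏ + μηᵏ)` and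
`‖x^{k+1} - yᵏ‖ ≤ δ‖x^{k-1} - xᵏ‖`. -/
def IsCDCA {n : ℕ} (f' : Euc n → Euc n) (h : Euc n → ℝ) (P : ℝ → Euc n → Euc n)
    (lam mu δ : ℝ) (x : ℕ → Euc n) : Prop :=
  ∀ k : ℕ, ∃ η ∈ SubdiffR h (x (k+1)), ∃ y,
    x (k+2) = P mu ((1 - mu*lam) • y - mu • f' y + (mu*lam) • x (k+1) + mu • η) ∧
    ‖x (k+2) - y‖ ≤ δ * ‖x k - x (k+1)‖

/-! ### Auxiliary lemmas -/

lemma lineDerivAux {n : ℕ} (f : Euc n → ℝ) (f' : Euc n → Euc n)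
    (hgrad : ∀ z, HasGradientAt f (f' z) z) (a v : Euc n) (t : ℝ) :
    HasDerivAt (fun s : ℝ => f (a + s • v)) ⟪f' (a + t • v), v⟫_ℝ t := by
  have hline : HasDerivAt (fun s : ℝ => a + s • v) v t := by
    simpa using ((hasDerivAt_id t).smul_const v).const_add a
  have := (hgrad (a + t • v)).hasFDerivAt.comp_hasDerivAt t hline
  simp only [InnerProductSpace.toDual_apply_apply] at this; exact this

lemma grad_convex_ineq {n : ℕ} (f : Euc n → ℝ) (f' : Euc n → Euc n)
    (hconv : ConvexOn ℝ Set.univ f) (hgrad : ∀ z, HasGradientAt f (f' z) z)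
    (a b : Euc n) : f a + ⟪f' a, b - a⟫_ℝ ≤ f b := by
  set v := b - a with hv
  have hd : HasDerivAt (fun s : ℝ => f (a + s • v)) ⟪f' a, v⟫_ℝ 0 := by
    simpa using lineDerivAux f f' hgrad a v 0
  have hslope : Tendsto (slope (fun s : ℝ => f (a + s • v)) 0) (𝓝[>] 0) (𝓝 ⟪f' a, v⟫_ℝ) :=
    (hasDerivAt_iff_tendsto_slope.mp hd).mono_left
      (nhdsWithin_mono _ (fun t ht => ne_of_gt ht))
  have hbound : ∀ᶠ t in 𝓝[>] (0:ℝ), slope (fun s : ℝ => f (a + s • v)) 0 t ≤ f b - f a := by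
    filter_upwards [Ioc_mem_nhdsGT_of_mem (by exact ⟨le_refl (0:ℝ), one_pos⟩ :
      (0:ℝ) ∈ Set.Ico 0 1)] with t ht
    have ht0 : 0 < t := ht.1
    have ht1 : t ≤ 1 := ht.2
    have hcomb : f (a + t • v) ≤ (1 - t) * f a + t * f b := by
      have := hconv.2 (Set.mem_univ a) (Set.mem_univ b) (by linarith : (0:ℝ) ≤ 1 - t)
        ht0.le (by ring)
      have heq : (1 - t) • a + t • b = a + t • v := by
        rw [hv]; module
      simpa [heq, smul_eq_mul] using this
    rw [slope_def_field]
    have : (f (a + t • v) - f (a + (0:ℝ) • v)) / (t - 0) ≤ f b - f a := by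
      rw [div_le_iff₀ (by linarith)]
      simp only [zero_smul, add_zero, sub_zero]
      nlinarith [hcomb]
    simpa [slope, div_eq_inv_mul] using this
  have := le_of_tendsto hslope hbound
  linarith [this]

lemma descent_lemma {n : ℕ} (f : Euc n → ℝ) (f' : Euc n → Euc n) (L : ℝ) (hL : 0 < L)
    (hgrad : ∀ z, HasGradientAt f (f' z) z)
    (hlip : ∀ z w, ‖f' z - f' w‖ ≤ L * ‖z - w‖)
    (a b : Euc n) : f b ≤ f a + ⟪f' a, b - a⟫_ℝ + L/2 * ‖b - a‖^2 := by
  set v := b - a with hv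
  have hcont : Continuous f' := by
    have : LipschitzWith (Real.toNNReal L) f' := by
      apply LipschitzWith.of_dist_le_mul
      intro z w
      rw [dist_eq_norm, dist_eq_norm, Real.coe_toNNReal L hL.le]
      exact hlip z w
    exact this.continuous
  have hderiv : ∀ t ∈ Set.uIcc (0:ℝ) 1,
      HasDerivAt (fun s : ℝ => f (a + s • v)) ⟪f' (a + t • v), v⟫_ℝ t := by
    intro t _
    have hline : HasDerivAt (fun s : ℝ => a + s • v) v t := by
      simpa using ((hasDerivAt_id t).smul_const v).const_add a
    have := (hgrad (a + t • v)).hasFDerivAt.comp_hasDerivAt t hline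
    simp only [InnerProductSpace.toDual_apply_apply] at this; exact this
  have hcont2 : Continuous fun t : ℝ => ⟪f' (a + t • v), v⟫_ℝ := by
    exact (continuous_inner.comp
      ((hcont.comp (continuous_const.add (continuous_id.smul continuous_const))).prodMk
        continuous_const))
  have hint : IntervalIntegrable (fun t : ℝ => ⟪f' (a + t • v), v⟫_ℝ)
      MeasureTheory.volume 0 1 := hcont2.intervalIntegrable _ _
  have hftc : ∫ t in (0:ℝ)..1, ⟪f' (a + t • v), v⟫_ℝ = f b - f a := by
    have := intervalIntegral.integral_eq_sub_of_hasDerivAt hderiv hint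
    simpa [hv] using this
  have hmono : ∫ t in (0:ℝ)..1, ⟪f' (a + t • v), v⟫_ℝ ≤
      ∫ t in (0:ℝ)..1, (⟪f' a, v⟫_ℝ + L * t * ‖v‖^2) := by
    apply intervalIntegral.integral_mono_on (by norm_num) hint
    · exact (Continuous.intervalIntegrable (continuous_const.add
        ((continuous_const.mul continuous_id).mul continuous_const)) _ _)
    · intro t ht
      have h1 : ⟪f' (a + t • v), v⟫_ℝ - ⟪f' a, v⟫_ℝ = ⟪f' (a + t • v) - f' a, v⟫_ℝ := by
        rw [inner_sub_left]
      have h2 : ⟪f' (a + t • v) - f' a, v⟫_ℝ ≤ ‖f' (a + t • v) - f' a‖ * ‖v‖ :=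
        real_inner_le_norm _ _
      have h3 : ‖f' (a + t • v) - f' a‖ ≤ L * (t * ‖v‖) := by
        have := hlip (a + t • v) a
        simpa [norm_smul, abs_of_nonneg ht.1] using this
      nlinarith [norm_nonneg v, ht.1, hL.le, mul_le_mul_of_nonneg_right h3 (norm_nonneg v)]
  have hrhs : ∫ t in (0:ℝ)..1, (⟪f' a, v⟫_ℝ + L * t * ‖v‖^2) =
      ⟪f' a, v⟫_ℝ + L/2 * ‖v‖^2 := by
    have heq : (fun t : ℝ => ⟪f' a, v⟫_ℝ + L * t * ‖v‖^2)
        = fun t : ℝ => ⟪f' a, v⟫_ℝ + (L * ‖v‖^2) * t := by funext t; ring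
    rw [heq, intervalIntegral.integral_add intervalIntegrable_const
      ((by fun_prop : Continuous fun t : ℝ => (L * ‖v‖^2) * t).intervalIntegrable _ _),
      intervalIntegral.integral_const, intervalIntegral.integral_const_mul, integral_id]
    simp; ring
  linarith [hftc ▸ hmono, hrhs ▸ hmono]

lemma lower_quad {n : ℕ} (f : Euc n → ℝ) (f' : Euc n → Euc n) (L : ℝ) (hL : 0 < L)
    (hconv : ConvexOn ℝ Set.univ f) (hgrad : ∀ z, HasGradientAt f (f' z) z)
    (hlip : ∀ z w, ‖f' z - f' w‖ ≤ L * ‖z - w‖) (p y : Euc n) :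
    f y + ⟪f' y, p - y⟫_ℝ + 1/(2*L) * ‖f' p - f' y‖^2 ≤ f p := by
  set w := f' p - f' y with hw
  set b := p - L⁻¹ • w with hb
  have h1 := grad_convex_ineq f f' hconv hgrad y b
  have h2 := descent_lemma f f' L hL hgrad hlip p b
  have e1 : b - p = -(L⁻¹ • w) := by rw [hb]; abel
  have e2 : b - y = (p - y) - L⁻¹ • w := by rw [hb]; abel
  have i1 : ⟪f' p, b - p⟫_ℝ = -(L⁻¹ * ⟪f' p, w⟫_ℝ) := by
    rw [e1, inner_neg_right, real_inner_smul_right]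
  have i2 : ⟪f' y, b - y⟫_ℝ = ⟪f' y, p - y⟫_ℝ - L⁻¹ * ⟪f' y, w⟫_ℝ := by
    rw [e2, inner_sub_right, real_inner_smul_right]
  have i3 : ‖b - p‖^2 = L⁻¹^2 * ‖w‖^2 := by
    rw [e1, norm_neg, norm_smul]
    rw [Real.norm_eq_abs, abs_of_pos (inv_pos.mpr hL)]
    ring
  have i4 : ⟪f' p, w⟫_ℝ - ⟪f' y, w⟫_ℝ = ‖w‖^2 := by
    rw [← inner_sub_left, ← hw, real_inner_self_eq_norm_sq]
  have key : L/2 * (L⁻¹^2 * ‖w‖^2) = 1/(2*L) * ‖w‖^2 := by field_simp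
  rw [i1, i3] at h2
  rw [i2] at h1
  have i5 : L⁻¹ * ⟪f' p, w⟫_ℝ - L⁻¹ * ⟪f' y, w⟫_ℝ = L⁻¹ * ‖w‖^2 := by
    rw [← mul_sub, i4]
  have key2 : L⁻¹ * ‖w‖^2 - 1/(2*L) * ‖w‖^2 = 1/(2*L) * ‖w‖^2 := by
    field_simp; ring
  linarith [h1, h2, key, i5, key2]

lemma coco_bound {n : ℕ} (f : Euc n → ℝ) (f' : Euc n → Euc n) (L : ℝ) (hL : 0 < L)
    (hconv : ConvexOn ℝ Set.univ f) (hgrad : ∀ z, HasGradientAt f (f' z) z)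
    (hlip : ∀ z w, ‖f' z - f' w‖ ≤ L * ‖z - w‖) (p y : Euc n) :
    ‖(f' p - f' y) - (L/2) • (p - y)‖ ≤ L/2 * ‖p - y‖ := by
  set w := f' p - f' y with hw
  have c1 := lower_quad f f' L hL hconv hgrad hlip p y
  have c2 := lower_quad f f' L hL hconv hgrad hlip y p
  have e0 : ‖f' y - f' p‖ = ‖w‖ := by rw [hw, norm_sub_rev]
  have e1 : ⟪f' y, p - y⟫_ℝ + ⟪f' p, y - p⟫_ℝ = -⟪w, p - y⟫_ℝ := by
    have h0 : (y : Euc n) - p = -(p - y) := by abel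
    have h1 : ⟪w, p - y⟫_ℝ = ⟪f' p, p - y⟫_ℝ - ⟪f' y, p - y⟫_ℝ := by
      rw [hw, inner_sub_left]
    rw [h0, inner_neg_right]
    linarith
  rw [e0] at c2
  rw [← hw] at c1
  have hco : ‖w‖^2 ≤ L * ⟪w, p - y⟫_ℝ := by
    have h3 : -⟪w, p - y⟫_ℝ + 1/L * ‖w‖^2 ≤ 0 := by
      have := add_le_add c1 c2
      have e2 : 1/(2*L) * ‖w‖^2 + 1/(2*L) * ‖w‖^2 = 1/L * ‖w‖^2 := by field_simp; ring
      linarith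
    have := mul_le_mul_of_nonneg_left h3 hL.le
    have e3 : L * (1/L * ‖w‖^2) = ‖w‖^2 := by field_simp
    nlinarith
  have hsq : ‖w - (L/2) • (p - y)‖^2 ≤ (L/2 * ‖p - y‖)^2 := by
    rw [norm_sub_sq_real, real_inner_smul_right, norm_smul, Real.norm_eq_abs,
      abs_of_pos (by linarith : (0:ℝ) < L/2)]
    nlinarith [hco]
  have hnn : (0:ℝ) ≤ L/2 * ‖p - y‖ := by positivity
  have := Real.sqrt_le_sqrt hsq
  rw [Real.sqrt_sq (norm_nonneg _), Real.sqrt_sq hnn] at this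
  exact this

lemma prox_ne_top {n : ℕ} {g : Euc n → EReal} {P : ℝ → Euc n → Euc n}
    (hg : ProperE g) (hP : IsProx g P) {mu : ℝ} (hmu : 0 < mu) (z : Euc n) :
    g (P mu z) ≠ ⊤ := by
  obtain ⟨y₀, hy₀⟩ := hg.2
  have hvi := (hP mu hmu z (P mu z)).mp rfl
  intro htop
  have h1 := hvi y₀
  rw [htop] at h1
  have hl : (⊤ : EReal) + ((1/(2*mu) * ‖z - P mu z‖^2 : ℝ) : EReal) = ⊤ :=
    EReal.top_add_of_ne_bot (EReal.coe_ne_bot _)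
  rw [hl, top_le_iff] at h1
  have : g y₀ = ⊤ := by
    by_contra hne
    have hb := hg.1 y₀
    rw [← EReal.coe_toReal hne hb, ← EReal.coe_add] at h1
    exact EReal.coe_ne_top _ h1
  exact hy₀ this

lemma prox_vi {n : ℕ} {g : Euc n → EReal} {P : ℝ → Euc n → Euc n}
    (hg : ProperE g) (hgconv : ConvexEReal g) (hP : IsProx g P)
    {mu : ℝ} (hmu : 0 < mu) (z u : Euc n) (hu : g u ≠ ⊤) :
    (g (P mu z)).toReal + (1/mu) * ⟪z - P mu z, u - P mu z⟫_ℝ ≤ (g u).toReal := by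
  set p := P mu z with hp
  have hptop : g p ≠ ⊤ := prox_ne_top hg hP hmu z
  have hpbot := hg.1 p
  have hubot := hg.1 u
  set gp := (g p).toReal with hgp
  set gu := (g u).toReal with hgu
  have hgpe : (gp : EReal) = g p := EReal.coe_toReal hptop hpbot
  have hgue : (gu : EReal) = g u := EReal.coe_toReal hu hubot
  have hvi := (hP mu hmu z p).mp rfl
  set c := 1/(2*mu) with hc
  have hcpos : 0 < c := by rw [hc]; positivity
  have hreal : ∀ t : ℝ, t ∈ Set.Ioc (0:ℝ) 1 →
      2*c * ⟪z - p, u - p⟫_ℝ ≤ gu - gp + c * t * ‖u - p‖^2 := by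
    intro t ht
    set yt := p + t • (u - p) with hyt
    have hcomb : (1 - t) • p + t • u = yt := by rw [hyt]; module
    have hconv := hgconv p u (1 - t) t (by linarith [ht.2]) ht.1.le (by ring)
    rw [hcomb, ← hgpe, ← hgue] at hconv
    have hconv2 : g yt ≤ (((1 - t) * gp + t * gu : ℝ) : EReal) := by
      rw [EReal.coe_add, EReal.coe_mul, EReal.coe_mul]; exact hconv
    have h1 := hvi yt
    rw [← hgpe] at h1
    have h2 : g yt + ((c * ‖z - yt‖^2 : ℝ) : EReal)
        ≤ (((1 - t) * gp + t * gu : ℝ) : EReal) + ((c * ‖z - yt‖^2 : ℝ) : EReal) :=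
      add_le_add_left hconv2 _
    have h3 : ((gp + c * ‖z - p‖^2 : ℝ) : EReal)
        ≤ (((1 - t) * gp + t * gu + c * ‖z - yt‖^2 : ℝ) : EReal) := by
      rw [EReal.coe_add gp, EReal.coe_add ((1-t)*gp + t*gu)]
      exact le_trans h1 h2
    have h4 : gp + c * ‖z - p‖^2 ≤ (1 - t) * gp + t * gu + c * ‖z - yt‖^2 :=
      EReal.coe_le_coe_iff.mp h3
    have hnorm : ‖z - yt‖^2 = ‖z - p‖^2 - 2*t*⟪z - p, u - p⟫_ℝ + t^2 * ‖u - p‖^2 := by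
      have : z - yt = (z - p) - t • (u - p) := by rw [hyt]; abel
      rw [this, norm_sub_sq_real, real_inner_smul_right, norm_smul, Real.norm_eq_abs,
        abs_of_pos ht.1]
      ring
    rw [hnorm] at h4
    have ht0 := ht.1
    have h5 : t * (2*c*⟪z - p, u - p⟫_ℝ) ≤ t * (gu - gp + c * t * ‖u - p‖^2) := by nlinarith
    exact le_of_mul_le_mul_left (by linarith [h5]) ht0
  have hM : (0:ℝ) ≤ c * ‖u - p‖^2 := by positivity
  have htend : Tendsto (fun t : ℝ => gu - gp + c * t * ‖u - p‖^2) (𝓝[>] (0:ℝ))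
      (𝓝 (gu - gp)) := by
    have : Continuous fun t : ℝ => gu - gp + c * t * ‖u - p‖^2 := by continuity
    have h0 : Tendsto (fun t : ℝ => gu - gp + c * t * ‖u - p‖ ^ 2) (𝓝[>] (0:ℝ))
        (𝓝 (gu - gp + c * 0 * ‖u - p‖ ^ 2)) :=
      (this.tendsto 0).mono_left nhdsWithin_le_nhds
    simpa using h0
  have hfin : 2*c * ⟪z - p, u - p⟫_ℝ ≤ gu - gp := by
    refine ge_of_tendsto htend ?_
    filter_upwards [Ioc_mem_nhdsGT_of_mem (by exact ⟨le_refl (0:ℝ), one_pos⟩ :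
      (0:ℝ) ∈ Set.Ico 0 1)] with t ht
    exact hreal t ht
  have h2c : 2*c = 1/mu := by rw [hc]; field_simp
  rw [h2c] at hfin
  linarith

/-- For a cDCA sequence with `x⁰ ∈ dom g` and `F = f + g - h` bounded
below on `ℝⁿ`, one has `Σ_{k=0}^∞ ‖xᵏ - x^{k+1}‖² < ∞`, and consequently
`‖xᵏ - x^{k+1}‖ → 0` as `k → ∞`. (Here `x 0 = x⁻¹` and `x (k+1) = xᵏ`.) -/
theorem stmt6 {n : ℕ}
    (f : Euc n → ℝ) (f' : Euc n → Euc n) (Lf : ℝ) (hLf : 0 < Lf)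
    (hfconv : ConvexOn ℝ Set.univ f)
    (hfgrad : ∀ z, HasGradientAt f (f' z) z)
    (hflip : ∀ z w, ‖f' z - f' w‖ ≤ Lf * ‖z - w‖)
    (g : Euc n → EReal) (hgproper : ProperE g) (hgconv : ConvexEReal g)
    (hglsc : LowerSemicontinuous g)
    (h : Euc n → ℝ) (hhconv : ConvexOn ℝ Set.univ h)
    (F : Euc n → EReal) (hF : ∀ z, F z = ((f z - h z : ℝ) : EReal) + g z)
    (P : ℝ → Euc n → Euc n) (hP : IsProx g P)
    (lam δ mu tau : ℝ) (hlam : 0 < lam) (hδ : δ ∈ Set.Ioo 0 (2*lam/Lf))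
    (hmu : mu = 2/(2*lam + Lf)) (htau : tau = Lf^2 * δ^2 / (8*lam))
    (x : ℕ → Euc n) (hx : IsCDCA f' h P lam mu δ x) (hx0 : g (x 1) ≠ ⊤)
    (hbdd : ∃ c : ℝ, ∀ z : Euc n, (c : EReal) ≤ F z) :
    Summable (fun k : ℕ => ‖x (k+1) - x (k+2)‖^2) ∧
      Tendsto (fun k : ℕ => ‖x (k+1) - x (k+2)‖) atTop (nhds 0) := by
  obtain ⟨c, hc⟩ := hbdd
  obtain ⟨hδ0, hδ1⟩ := hδ
  have hLδ : Lf * δ < 2 * lam := by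
    have := (lt_div_iff₀ hLf).mp hδ1
    linarith
  have h2L : (0:ℝ) < 2*lam + Lf := by linarith
  have hmupos : 0 < mu := by rw [hmu]; positivity
  have hmu1 : mu * (lam + Lf/2) = 1 := by
    rw [hmu]; field_simp
  have htau0 : 0 ≤ tau := by rw [htau]; positivity
  have hrho : 0 < lam/2 - tau := by
    have h0 : (Lf*δ)^2 < (2*lam)^2 :=
      pow_lt_pow_left₀ hLδ (by positivity) (by norm_num)
    have h1 : Lf^2 * δ^2 < 4 * lam^2 := by nlinarith [h0]
    rw [htau]
    rw [sub_pos, div_lt_iff₀ (by positivity)]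
    nlinarith
  -- finiteness of g along the sequence
  have hfin : ∀ k : ℕ, g (x (k+1)) ≠ ⊤ := by
    intro k
    cases k with
    | zero => exact hx0
    | succ j =>
      obtain ⟨η, hη, y, hxe, hb⟩ := hx j
      rw [hxe]
      exact prox_ne_top hgproper hP hmupos _
  -- real-valued merit function
  set Φ : ℕ → ℝ := fun k => f (x (k+1)) - h (x (k+1)) + (g (x (k+1))).toReal with hΦ
  set s : ℕ → ℝ := fun k => ‖x k - x (k+1)‖^2 with hs
  have hsnn : ∀ k, 0 ≤ s k := by intro k; rw [hs]; positivity
  have hΦlb : ∀ k, c ≤ Φ k := by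
    intro k
    have h1 := hc (x (k+1))
    rw [hF, ← EReal.coe_toReal (hfin k) (hgproper.1 _), ← EReal.coe_add] at h1
    exact EReal.coe_le_coe_iff.mp h1
  -- key descent inequality
  have hdes : ∀ k, Φ (k+1) + lam/2 * s (k+1) ≤ Φ k + tau * s k := by
    intro k
    obtain ⟨η, hη, y, hxe, hb⟩ := hx k
    set u := x (k+1) with hu
    set p := x (k+2) with hpd
    set z := (1 - mu*lam) • y - mu • f' y + (mu*lam) • u + mu • η with hz
    have hvi := prox_vi hgproper hgconv hP hmupos z u (hfin k)
    rw [← hxe] at hvi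
    set w := (Lf/2) • (y - p) + lam • (u - p) - f' y + η with hwd
    have hzw : z - p = mu • w := by
      rw [hz, hwd]
      match_scalars <;>
        first
          | ring1
          | linear_combination hmu1
          | linear_combination -hmu1
    have hinner : (1/mu) * ⟪z - p, u - p⟫_ℝ = ⟪w, u - p⟫_ℝ := by
      rw [hzw, real_inner_smul_left]
      field_simp
    have hwexp : ⟪w, u - p⟫_ℝ = Lf/2 * ⟪y - p, u - p⟫_ℝ + lam * ‖u - p‖^2
        - ⟪f' y, u - p⟫_ℝ + ⟪η, u - p⟫_ℝ := by
      rw [hwd]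
      rw [inner_add_left, inner_sub_left, inner_add_left, real_inner_smul_left,
        real_inner_smul_left, real_inner_self_eq_norm_sq]
    have hfineq := grad_convex_ineq f f' hfconv hfgrad p u
    have hhineq := hη p
    have hco := coco_bound f f' Lf hLf hfconv hfgrad hflip p y
    set v := (f' p - f' y) - (Lf/2) • (p - y) with hvd
    have hT : ⟪v, u - p⟫_ℝ = ⟪f' p, u - p⟫_ℝ - ⟪f' y, u - p⟫_ℝ
        + Lf/2 * ⟪y - p, u - p⟫_ℝ := by
      rw [hvd]
      have hpy : (p : Euc n) - y = -(y - p) := by abel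
      rw [inner_sub_left, inner_sub_left, hpy, smul_neg, inner_neg_left,
        real_inner_smul_left]
      ring
    have hetaeq : ⟪η, p - u⟫_ℝ = -⟪η, u - p⟫_ℝ := by
      have hpu : (p : Euc n) - u = -(u - p) := by abel
      rw [hpu, inner_neg_right]
    have hCS : -(‖v‖ * ‖u - p‖) ≤ ⟪v, u - p⟫_ℝ := by
      have := abs_real_inner_le_norm v (u - p)
      have := neg_abs_le ⟪v, u - p⟫_ℝ
      linarith [abs_real_inner_le_norm v (u - p)]
    have hnv : ‖v‖ * ‖u - p‖ ≤ (Lf/2 * ‖p - y‖) * ‖u - p‖ :=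
      mul_le_mul_of_nonneg_right hco (norm_nonneg _)
    have hpyb : ‖p - y‖ ≤ δ * ‖x k - u‖ := hb
    have hnv2 : (Lf/2 * ‖p - y‖) * ‖u - p‖ ≤ (Lf/2 * (δ * ‖x k - u‖)) * ‖u - p‖ := by
      apply mul_le_mul_of_nonneg_right _ (norm_nonneg _)
      apply mul_le_mul_of_nonneg_left hpyb (by linarith)
    have hyoung : (Lf/2 * (δ * ‖x k - u‖)) * ‖u - p‖ ≤ lam/2 * ‖u - p‖^2
        + tau * ‖x k - u‖^2 := by
      have hid : lam/2 * ‖u - p‖^2 + tau * ‖x k - u‖^2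
          - (Lf/2 * (δ * ‖x k - u‖)) * ‖u - p‖
          = (2*lam*‖u - p‖ - Lf*δ*‖x k - u‖)^2 / (8*lam) := by
        rw [htau]; field_simp; ring
      nlinarith [sq_nonneg (2*lam*‖u - p‖ - Lf*δ*‖x k - u‖), hlam,
        div_nonneg (sq_nonneg (2*lam*‖u - p‖ - Lf*δ*‖x k - u‖)) (by linarith : (0:ℝ) ≤ 8*lam)]
    have hΦk : Φ k = f u - h u + (g u).toReal := by rw [hΦ]
    have hΦk1 : Φ (k+1) = f p - h p + (g p).toReal := by rw [hΦ]
    have hsk : s k = ‖x k - u‖^2 := by rw [hs]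
    have hsk1 : s (k+1) = ‖u - p‖^2 := by rw [hs]
    rw [hΦk, hΦk1, hsk, hsk1]
    have hmain : lam * ‖u - p‖^2 + ⟪v, u - p⟫_ℝ ≤
        (f u - h u + (g u).toReal) - (f p - h p + (g p).toReal) := by
      linarith [hvi, hinner, hwexp, hfineq, hhineq, hT, hetaeq]
    linarith [hmain, hCS, hnv, hnv2, hyoung]
  -- telescoping and summability
  have hE : ∀ k, (lam/2 - tau) * s (k+1) ≤ (Φ k + tau * s k) - (Φ (k+1) + tau * s (k+1)) := by
    intro k; linarith [hdes k]
  have hpartial : ∀ N, ∑ i ∈ Finset.range N, s (i+1) ≤ (Φ 0 + tau * s 0 - c) / (lam/2 - tau) := by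
    intro N
    have key : (lam/2 - tau) * ∑ i ∈ Finset.range N, s (i+1)
        ≤ (Φ 0 + tau * s 0) - (Φ N + tau * s N) := by
      induction N with
      | zero => simp
      | succ m ih =>
        rw [Finset.sum_range_succ, mul_add]
        linarith [hE m]
    have hlb : c ≤ Φ N + tau * s N := by
      have h1 := hΦlb N
      have h2 : 0 ≤ tau * s N := mul_nonneg htau0 (hsnn N)
      linarith
    rw [le_div_iff₀ hrho]
    have key2 : (∑ i ∈ Finset.range N, s (i+1)) * (lam/2 - tau)
        ≤ Φ 0 + tau * s 0 - (Φ N + tau * s N) := by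
      rw [mul_comm]; exact key
    calc (∑ i ∈ Finset.range N, s (i+1)) * (lam/2 - tau)
        ≤ Φ 0 + tau * s 0 - (Φ N + tau * s N) := key2
      _ ≤ Φ 0 + tau * s 0 - c := by linarith [hlb]
  have hsum : Summable (fun k => s (k+1)) :=
    summable_of_sum_range_le (fun k => hsnn (k+1)) hpartial
  have hseq : (fun k : ℕ => ‖x (k+1) - x (k+2)‖^2) = fun k => s (k+1) := by
    funext k; rw [hs]
  constructor
  · rw [hseq]; exact hsum
  · have h0 := hsum.tendsto_atTop_zero
    have hnorm : (fun k : ℕ => ‖x (k+1) - x (k+2)‖) = fun k => Real.sqrt (s (k+1)) := by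
      funext k
      rw [hs]
      exact (Real.sqrt_sq (norm_nonneg _)).symm
    rw [hnorm]
    have := (Real.continuous_sqrt.tendsto 0).comp h0
    simpa [Function.comp_def, Real.sqrt_zero] using this
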